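/- Let G be an irreducible finite Coxeter group with degrees d_1 ≤ ... ≤ d_{n-1} < d_n and (g,ζ,q) an admissible triplet. For any set of basic invariants x^1,...,x^n, the value x^n(q) of the top-degree invariant at q is nonzero. -/

import Mathlib

open MvPolynomial Matrix

/-- Iterated partial derivative `∂^b` for a multi-index `b`. -/
noncomputable def pd {n : ℕ} (b : Fin n → ℕ) :
    Module.End ℂ (MvPolynomial (Fin n) ℂ) :=
  (List.ofFn fun α : Fin n =>
    (((pderiv α : Derivation ℂ (MvPolynomial (Fin n) ℂ) _).toLinearMap :
      Module.End ℂ (MvPolynomial (Fin n) ℂ)) ^ (b α))).prod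

/-- The algebra endomorphism `F ↦ F ∘ M` given by substitution of a matrix. -/
noncomputable def subst {n : ℕ} (M : Matrix (Fin n) (Fin n) ℂ) :
    MvPolynomial (Fin n) ℂ →ₐ[ℂ] MvPolynomial (Fin n) ℂ :=
  aeval fun i => ∑ j, M i j • X j

/-- The action of `g ∈ GL(V)` on polynomials: `(g • F)(v) = F (g⁻¹ v)`. -/
noncomputable def polyAct {n : ℕ} (g : GL (Fin n) ℂ) (f : MvPolynomial (Fin n) ℂ) :
    MvPolynomial (Fin n) ℂ := subst (g⁻¹).val f

/-- A reflection: diagonalizable with all but one eigenvalue equal to 1. -/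
def IsReflection {n : ℕ} (g : GL (Fin n) ℂ) : Prop :=
  ∃ (P : GL (Fin n) ℂ) (i₀ : Fin n),
    ((P⁻¹).val * g.val * P.val).IsDiag ∧
    ∀ i, i ≠ i₀ → ((P⁻¹).val * g.val * P.val) i i = 1

/-- A finite complex reflection group. -/
def IsReflGroup {n : ℕ} (G : Subgroup (GL (Fin n) ℂ)) : Prop :=
  Finite G ∧ G = Subgroup.closure {g | g ∈ G ∧ IsReflection g}

/-- `f` is a `G`-invariant polynomial. -/
def Invariant {n : ℕ} (G : Subgroup (GL (Fin n) ℂ)) (f : MvPolynomial (Fin n) ℂ) : Prop :=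
  ∀ g ∈ G, polyAct g f = f

/-- `x` is a set of basic invariants of `G` with degrees `d`. -/
structure IsBasicInvts {n : ℕ} (G : Subgroup (GL (Fin n) ℂ))
    (x : Fin n → MvPolynomial (Fin n) ℂ) (d : Fin n → ℕ) : Prop where
  invariant : ∀ α, Invariant G (x α)
  homog : ∀ α, (x α).IsHomogeneous (d α)
  indep : AlgebraicIndependent ℂ x
  gen : ∀ f, Invariant G f → f ∈ Algebra.adjoin ℂ (Set.range x)
  mono : Monotone d
  pos : ∀ α, 0 < d α

/-- Admissibility of the triplet `(g, ζ, q)`. -/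
structure Admissible {n : ℕ} (G : Subgroup (GL (Fin (n+1)) ℂ))
    (x : Fin (n+1) → MvPolynomial (Fin (n+1)) ℂ) (d : Fin (n+1) → ℕ)
    (g : GL (Fin (n+1)) ℂ) (ζ : ℂ) (q : Fin (n+1) → ℂ) : Prop where
  mem : g ∈ G
  nonzero : q ≠ 0
  eig : Matrix.mulVec g.val q = ζ • q
  prim : IsPrimitiveRoot ζ (d (Fin.last n))
  jac : IsUnit (Matrix.det (Matrix.of fun α β => eval q (pderiv β (x α))))
  eigvals : ∃ P : GL (Fin (n+1)) ℂ,
    (P⁻¹).val * g.val * P.val =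
      Matrix.diagonal fun α => ζ ^ ((1 : ℤ) - (d α : ℤ))

/-- `φ[g,ζ,q]` read through the identification of `ℂ[V]^G` with a polynomial
ring in the basic invariants: `X^a ↦ φ(x^a)`. -/
noncomputable def phiAux {n : ℕ} (x : Fin n → MvPolynomial (Fin n) ℂ) (q : Fin n → ℂ) :
    MvPolynomial (Fin n) ℂ →ₐ[ℂ] MvPolynomial (Fin n) ℂ :=
  ((aeval fun i => X i + C (q i)).comp (aeval x)).comp
    (aeval fun α => X α - C (eval q (x α)))

/-- `ψ[g,ζ,q]` read through the identification of `ℂ[V]^G` with a polynomial ring: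
on each weighted-degree-`j` part it takes the weight-`j` part of `φ`. -/
noncomputable def psiAux {n : ℕ} (x : Fin n → MvPolynomial (Fin n) ℂ) (d : Fin n → ℕ)
    (q : Fin n → ℂ) (P : MvPolynomial (Fin n) ℂ) : MvPolynomial (Fin n) ℂ :=
  ∑ j ∈ Finset.range (P.totalDegree * (∑ α, d α) + 1),
    weightedHomogeneousComponent d j (phiAux x q (weightedHomogeneousComponent d j P))

/-- A finite Coxeter group: finite, defined over ℝ (real matrix entries), and generated
by its order-2 reflections. -/
def IsCoxLike {n : ℕ} (G : Subgroup (GL (Fin n) ℂ)) : Prop :=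
  Finite G ∧ (∀ g ∈ G, ∀ i j, ∃ r : ℝ, (g : GL (Fin n) ℂ).val i j = (r : ℂ)) ∧
  G = Subgroup.closure {g | g ∈ G ∧ IsReflection g ∧ g * g = 1}

/-- The action of `G` on `V` is irreducible. -/
def IsIrredOn {n : ℕ} (G : Subgroup (GL (Fin n) ℂ)) : Prop :=
  ∀ W : Submodule ℂ (Fin n → ℂ),
    (∀ g ∈ G, ∀ w ∈ W, Matrix.mulVec (g : GL (Fin n) ℂ).val w ∈ W) → W = ⊥ ∨ W = ⊤


section GBIAux

lemma eval_subst_aux {n : ℕ} (M : Matrix (Fin n) (Fin n) ℂ) (q : Fin n → ℂ)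
    (f : MvPolynomial (Fin n) ℂ) :
    eval q (subst M f) = eval (M.mulVec q) f := by
  rw [subst, aeval_def, eval₂_comp_left (eval q)]
  rw [show ((eval q : MvPolynomial (Fin n) ℂ →+* ℂ).comp (algebraMap ℂ _)) = RingHom.id ℂ by
    ext r; simp]
  rw [show ((eval q : MvPolynomial (Fin n) ℂ →+* ℂ) ∘ (fun i => ∑ j, M i j • X j)) = M.mulVec q by
    funext i; simp [Matrix.mulVec, dotProduct, smul_eval]]
  rfl

lemma subst_subst_aux {n : ℕ} (M N : Matrix (Fin n) (Fin n) ℂ) (f : MvPolynomial (Fin n) ℂ) :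
    subst M (subst N f) = subst (N * M) f := by
  have : (subst M).comp (subst N) = subst (N * M) := by
    apply MvPolynomial.algHom_ext
    intro i
    simp only [subst, AlgHom.comp_apply, aeval_X, map_sum, _root_.map_smul, Matrix.mul_apply,
      Finset.sum_smul, smul_smul, aeval_X, Finset.smul_sum]
    rw [Finset.sum_comm]
  exact DFunLike.congr_fun this f

lemma subst_one_aux {n : ℕ} (f : MvPolynomial (Fin n) ℂ) :
    subst (1 : Matrix (Fin n) (Fin n) ℂ) f = f := by
  have : subst (1 : Matrix (Fin n) (Fin n) ℂ) = AlgHom.id ℂ _ := by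
    apply MvPolynomial.algHom_ext
    intro i
    simp [subst, Matrix.one_apply]
  rw [this]; rfl

lemma polyAct_polyAct_aux {n : ℕ} (h g : GL (Fin n) ℂ) (f : MvPolynomial (Fin n) ℂ) :
    polyAct h (polyAct g f) = polyAct (h * g) f := by
  rw [polyAct, polyAct, polyAct, subst_subst_aux,
    show ((h * g)⁻¹).val = (g⁻¹).val * (h⁻¹).val by rw [_root_.mul_inv_rev, Units.val_mul]]

lemma polyAct_one_aux {n : ℕ} (f : MvPolynomial (Fin n) ℂ) : polyAct 1 f = f := by
  rw [polyAct, inv_one]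
  exact subst_one_aux f

lemma eval_homog_smul_aux {n m : ℕ} {f : MvPolynomial (Fin n) ℂ} (hf : f.IsHomogeneous m)
    (c : ℂ) (v : Fin n → ℂ) : eval (c • v) f = c ^ m * eval v f := by
  rw [eval_eq, eval_eq, Finset.mul_sum]
  apply Finset.sum_congr rfl
  intro d hd
  have hdm : ∑ i ∈ d.support, d i = m := by
    have h2 := hf (mem_support_iff.mp hd)
    simpa [Finsupp.weight_apply, Finsupp.sum] using h2
  calc coeff d f * ∏ i ∈ d.support, (c • v) i ^ d i
      = coeff d f * ((∏ i ∈ d.support, c ^ d i) * ∏ i ∈ d.support, v i ^ d i) := by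
        rw [← Finset.prod_mul_distrib]; simp [mul_pow]
    _ = c ^ m * (coeff d f * ∏ i ∈ d.support, v i ^ d i) := by
        rw [Finset.prod_pow_eq_pow_sum, hdm]; ring

lemma eval_aeval_aux {n : ℕ} (v : Fin n → ℂ) (x : Fin n → MvPolynomial (Fin n) ℂ)
    (P : MvPolynomial (Fin n) ℂ) :
    eval v (aeval x P) = eval (fun α => eval v (x α)) P := by
  rw [aeval_def, eval₂_comp_left (eval v)]
  rw [show ((eval v : MvPolynomial (Fin n) ℂ →+* ℂ).comp (algebraMap ℂ _)) = RingHom.id ℂ by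
    ext r; simp]
  rfl

end GBIAux

/-- For an irreducible finite Coxeter group `G` with degrees `d_1 ≤ … ≤ d_{n-1} < d_n`
and an admissible triplet `(g, ζ, q)`, the value `x^n(q)` of the top-degree basic
invariant at `q` is nonzero. -/
theorem good_basic_invariants_stmt16 {n : ℕ} (G : Subgroup (GL (Fin (n+1)) ℂ))
    (hG : IsReflGroup G) (hcox : IsCoxLike G) (hirr : IsIrredOn G)
    (x : Fin (n+1) → MvPolynomial (Fin (n+1)) ℂ) (d : Fin (n+1) → ℕ)
    (hx : IsBasicInvts G x d)
    (hlt : ∀ α, α ≠ Fin.last n → d α < d (Fin.last n))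
    (g : GL (Fin (n+1)) ℂ) (ζ : ℂ) (q : Fin (n+1) → ℂ)
    (adm : Admissible G x d g ζ q) :
    eval q (x (Fin.last n)) ≠ 0 := by
  classical
  intro h0
  haveI : Finite G := hG.1
  haveI : Fintype G := Fintype.ofFinite G
  set L := Fin.last n with hL
  have hDpos : 0 < d L := hx.pos L
  have hzD : ζ ^ d L = 1 := adm.prim.pow_eq_one
  have hz0 : ζ ≠ 0 := by
    intro h
    rw [h, zero_pow hDpos.ne'] at hzD
    exact zero_ne_one hzD
  -- the eigenvector identity : g⁻¹ q = ζ⁻¹ q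
  have hqinv : (g⁻¹).val.mulVec q = ζ⁻¹ • q := by
    have h1 : (g⁻¹).val.mulVec (g.val.mulVec q) = q := by
      rw [Matrix.mulVec_mulVec]
      rw [show (g⁻¹).val * g.val = 1 by
        rw [← Units.val_mul, inv_mul_cancel, Units.val_one]]
      exact Matrix.one_mulVec q
    have h2 : (g⁻¹).val.mulVec (ζ • q) = q := by rw [← adm.eig]; exact h1
    rw [Matrix.mulVec_smul] at h2
    have h3 := congrArg (fun v => ζ⁻¹ • v) h2
    simp only [smul_smul, inv_mul_cancel₀ hz0, one_smul] at h3
    exact h3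
  -- all basic invariants vanish at q
  have hxq : ∀ α, eval q (x α) = 0 := by
    intro α
    by_cases hα : α = L
    · rw [hα]; exact h0
    · have hinv : polyAct g (x α) = x α := hx.invariant α g adm.mem
      have h1 : eval q (x α) = eval (ζ⁻¹ • q) (x α) := by
        conv_lhs => rw [← hinv, polyAct, eval_subst_aux, hqinv]
      rw [eval_homog_smul_aux (hx.homog α)] at h1
      by_contra hv
      have hc : (ζ⁻¹) ^ d α = 1 := by
        have h2 : (ζ⁻¹ ^ d α - 1) * eval q (x α) = 0 := by
          rw [sub_mul, one_mul, ← h1, sub_self]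
        rcases mul_eq_zero.mp h2 with h | h
        · exact sub_eq_zero.mp h
        · exact absurd h hv
      rw [inv_pow, inv_eq_one] at hc
      exact adm.prim.pow_ne_one_of_pos_of_lt (hx.pos α).ne' (hlt α hα) hc
  -- any invariant polynomial takes the same value at q and at 0
  have hsame : ∀ f : MvPolynomial (Fin (n+1)) ℂ, Invariant G f → eval q f = eval 0 f := by
    intro f hf
    have hmem := hx.gen f hf
    rw [Algebra.adjoin_range_eq_range_aeval] at hmem
    obtain ⟨P, hP⟩ := hmem
    rw [← hP]
    show (eval q) ((aeval x) P) = (eval 0) ((aeval x) P)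
    rw [eval_aeval_aux, eval_aeval_aux]
    have hz : (fun α => eval q (x α)) = (fun α => eval (0 : Fin (n+1) → ℂ) (x α)) := by
      funext α
      rw [hxq α]
      have h4 : (0 : Fin (n+1) → ℂ) = (0 : ℂ) • (0 : Fin (n+1) → ℂ) := by simp
      rw [h4, eval_homog_smul_aux (hx.homog α), zero_pow (hx.pos α).ne', zero_mul]
    rw [hz]
  -- the characteristic polynomial trick
  have hq0 : q = 0 := by
    funext i
    set N := Fintype.card G with hN
    have hNpos : 0 < N := Fintype.card_pos
    set Q : Polynomial (MvPolynomial (Fin (n+1)) ℂ) :=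
      ∏ h : G, (Polynomial.X - Polynomial.C (polyAct (h : GL (Fin (n+1)) ℂ) (X i))) with hQ
    -- coefficients of Q are invariant
    have hcoeff : ∀ j, Invariant G (Q.coeff j) := by
      intro j h hh
      have hmap : Q.map (subst ((h⁻¹ : GL (Fin (n+1)) ℂ)).val).toRingHom = Q := by
        rw [hQ, Polynomial.map_prod]
        have : ∀ k : G, (Polynomial.X - Polynomial.C
              (polyAct (k : GL (Fin (n+1)) ℂ) (X i))).map
              (subst ((h⁻¹ : GL (Fin (n+1)) ℂ)).val).toRingHom
            = Polynomial.X - Polynomial.C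
              (polyAct (((⟨h, hh⟩ : G) * k : G) : GL (Fin (n+1)) ℂ) (X i)) := by
          intro k
          rw [Polynomial.map_sub, Polynomial.map_X, Polynomial.map_C]
          congr 1
          show Polynomial.C (polyAct h (polyAct (k : GL (Fin (n+1)) ℂ) (X i))) = _
          rw [polyAct_polyAct_aux]
          rfl
        rw [Finset.prod_congr rfl (fun k _ => this k)]
        exact Fintype.prod_equiv (Equiv.mulLeft (⟨h, hh⟩ : G)) _ _ (fun k => rfl)
      show polyAct h (Q.coeff j) = Q.coeff j
      conv_rhs => rw [← hmap]
      rw [Polynomial.coeff_map]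
      rfl
    -- Q.map (eval q) = X ^ N
    have hmapq : Q.map (eval q : MvPolynomial (Fin (n+1)) ℂ →+* ℂ) = Polynomial.X ^ N := by
      have hmap0 : Q.map (eval (0 : Fin (n+1) → ℂ) : MvPolynomial (Fin (n+1)) ℂ →+* ℂ)
          = Polynomial.X ^ N := by
        rw [hQ, Polynomial.map_prod]
        have : ∀ k : G, (Polynomial.X - Polynomial.C
              (polyAct (k : GL (Fin (n+1)) ℂ) (X i))).map
              (eval (0 : Fin (n+1) → ℂ) : MvPolynomial (Fin (n+1)) ℂ →+* ℂ)
            = Polynomial.X := by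
          intro k
          rw [Polynomial.map_sub, Polynomial.map_X, Polynomial.map_C]
          have : eval (0 : Fin (n+1) → ℂ) (polyAct (k : GL (Fin (n+1)) ℂ) (X i)) = 0 := by
            rw [polyAct, eval_subst_aux, Matrix.mulVec_zero, eval_X]
            rfl
          rw [this, map_zero, sub_zero]
        rw [Finset.prod_congr rfl (fun k _ => this k), Finset.prod_const, Finset.card_univ]
      apply Polynomial.ext
      intro j
      rw [Polynomial.coeff_map, hsame _ (hcoeff j), ← Polynomial.coeff_map, hmap0]
    -- evaluate Q at X i, then at q
    have hQeval : Polynomial.eval (X i : MvPolynomial (Fin (n+1)) ℂ) Q = 0 := by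
      rw [hQ, Polynomial.eval_prod]
      apply Finset.prod_eq_zero (Finset.mem_univ (1 : G))
      rw [Polynomial.eval_sub, Polynomial.eval_X, Polynomial.eval_C]
      show (X i : MvPolynomial (Fin (n+1)) ℂ) - polyAct 1 (X i) = 0
      rw [polyAct_one_aux, sub_self]
    have : q i ^ N = 0 := by
      have h1 := congrArg (eval q) hQeval
      rw [map_zero] at h1
      rw [← Polynomial.eval₂_at_apply (eval q : MvPolynomial (Fin (n+1)) ℂ →+* ℂ)] at h1
      rw [← Polynomial.eval_map, hmapq, eval_X] at h1
      simpa using h1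
    exact pow_eq_zero_iff hNpos.ne' |>.mp this
  exact adm.nonzero hq0
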